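/- arXiv:1806.02046 — 2 statements merged into one kernel-verified Lean document; each statement's English description precedes it below -/
import Mathlib

section
/- Let A_1, ..., A_m be real symmetric n×n matrices defining the linear sensing map A(X)_i = ⟨A_i, X⟩, let b ∈ ℝ^m, and let X⋆ ∈ ℝ^{n×n} be a positive semi-definite matrix with A(X⋆) = b. Suppose there exist φ ∈ ℝ^m and an invertible matrix V ∈ ℝ^{n×n} such that Σ_{i=1}^m φ_i A_i = V Vᵀ. Define M_i := V^{-1} A_i (V^{-1})ᵀ and suppose Y⋆ := Vᵀ X⋆ V is the unique minimizer of the nuclear norm over the affine set {Y ∈ ℝ^{n×n} : ⟨M_i, Y⟩ = b_i for all i}. Then the feasibility set {X ∈ ℝ^{n×n} : ⟨A_i, X⟩ = b_i for all i, X ⪰ 0} is exactly the singleton {X⋆}. -/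
open Matrix

/-- The nuclear norm of a real square matrix: the trace of `√(Yᴴ Y)`
(for real matrices, `Yᴴ = Yᵀ`), i.e. the sum of the singular values. -/
noncomputable def nuclearNorm {n : ℕ} (Y : Matrix (Fin n) (Fin n) ℝ) : ℝ :=
  ((((Matrix.posSemidef_conjTranspose_mul_self Y).1.eigenvectorUnitary : Matrix (Fin n) (Fin n) ℝ) *
    diagonal (fun i => Real.sqrt ((Matrix.posSemidef_conjTranspose_mul_self Y).1.eigenvalues i)) *
    (star (Matrix.posSemidef_conjTranspose_mul_self Y).1.eigenvectorUnitary : Matrix (Fin n) (Fin n) ℝ))).trace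

lemma nuclearNorm_of_posSemidef {n : ℕ} {Y : Matrix (Fin n) (Fin n) ℝ}
    (hY : Y.PosSemidef) : nuclearNorm Y = Y.trace := by
  have hH := (Matrix.posSemidef_conjTranspose_mul_self Y).1
  have e : nuclearNorm Y = (cfc Real.sqrt (Yᴴ * Y)).trace := by
    rw [hH.cfc_eq, IsHermitian.cfc, Unitary.conjStarAlgAut_apply]
    rfl
  rw [e]
  open scoped MatrixOrder in
  have h0 : (0 : Matrix (Fin n) (Fin n) ℝ) ≤ Y := Matrix.nonneg_iff_posSemidef.mpr hY
  have hsq : Yᴴ * Y = Y ^ 2 := by rw [pow_two, hY.1.eq]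
  open scoped MatrixOrder in
  have hc : cfc Real.sqrt (Y ^ 2) = CFC.sqrt (Y ^ 2) := by
    rw [CFC.sqrt_eq_real_sqrt _ (Matrix.nonneg_iff_posSemidef.mpr (hsq ▸ Matrix.posSemidef_conjTranspose_mul_self Y)), cfcₙ_eq_cfc]
  open scoped MatrixOrder in
  rw [hsq, hc, CFC.sqrt_sq Y h0]

/-- If the sensing matrices `A i` are symmetric, `X⋆ ⪰ 0` fits the measurements `b`,
some combination `∑ φ i • A i = V Vᵀ` with `V` invertible, and
`Y⋆ = Vᵀ X⋆ V` is the unique nuclear-norm minimizer over the affine set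
`{Y | ⟨Mᵢ, Y⟩ = bᵢ}` where `Mᵢ = V⁻¹ Aᵢ (V⁻¹)ᵀ`, then the PSD feasibility set
for the original measurements is exactly `{X⋆}`. -/
theorem psd_feasible_set_singleton
    {n m : ℕ}
    (A : Fin m → Matrix (Fin n) (Fin n) ℝ)
    (hAsymm : ∀ i, (A i).IsSymm)
    (b : Fin m → ℝ)
    (Xstar : Matrix (Fin n) (Fin n) ℝ)
    (hXstarPSD : Xstar.PosSemidef)
    (hXstarFit : ∀ i, ((A i)ᵀ * Xstar).trace = b i)
    (φ : Fin m → ℝ)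
    (V : Matrix (Fin n) (Fin n) ℝ)
    (hV : IsUnit V.det)
    (hsum : ∑ i, φ i • A i = V * Vᵀ)
    (M : Fin m → Matrix (Fin n) (Fin n) ℝ)
    (hM : ∀ i, M i = V⁻¹ * A i * (V⁻¹)ᵀ)
    (Ystar : Matrix (Fin n) (Fin n) ℝ)
    (hYstar : Ystar = Vᵀ * Xstar * V)
    (hYstarFeas : ∀ i, ((M i)ᵀ * Ystar).trace = b i)
    (hYstarUnique : ∀ Y : Matrix (Fin n) (Fin n) ℝ,
      (∀ i, ((M i)ᵀ * Y).trace = b i) → Y ≠ Ystar →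
        nuclearNorm Ystar < nuclearNorm Y) :
    {X : Matrix (Fin n) (Fin n) ℝ |
      (∀ i, ((A i)ᵀ * X).trace = b i) ∧ X.PosSemidef} = {Xstar} := by
  have hVT : IsUnit (Vᵀ).det := by rwa [Matrix.det_transpose]
  have hVVinv : V * V⁻¹ = 1 := Matrix.mul_nonsing_inv V hV
  have hVinvV : V⁻¹ * V = 1 := Matrix.nonsing_inv_mul V hV
  have hVTinv : (V⁻¹)ᵀ * Vᵀ = 1 := by
    rw [← Matrix.transpose_mul, hVVinv, Matrix.transpose_one]
  -- trace of Vᵀ X V when X is feasible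
  have key_trace : ∀ X : Matrix (Fin n) (Fin n) ℝ,
      (∀ i, ((A i)ᵀ * X).trace = b i) → (Vᵀ * X * V).trace = ∑ i, φ i * b i := by
    intro X hfit
    have : (Vᵀ * X * V).trace = (X * (V * Vᵀ)).trace := by
      rw [Matrix.trace_mul_comm, ← Matrix.mul_assoc, Matrix.trace_mul_comm]
    rw [this, ← hsum, Matrix.mul_sum, Matrix.trace_sum]
    refine Finset.sum_congr rfl fun i _ => ?_
    rw [Matrix.mul_smul, Matrix.trace_smul, smul_eq_mul, Matrix.trace_mul_comm,
      ← (hAsymm i).eq, hfit i]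
  -- feasibility transfer
  have key_feas : ∀ X : Matrix (Fin n) (Fin n) ℝ,
      (∀ i, ((A i)ᵀ * X).trace = b i) → ∀ i, ((M i)ᵀ * (Vᵀ * X * V)).trace = b i := by
    intro X hfit i
    have hMT : (M i)ᵀ = V⁻¹ * (A i)ᵀ * (V⁻¹)ᵀ := by
      rw [hM i, Matrix.transpose_mul, Matrix.transpose_mul, Matrix.transpose_transpose,
        Matrix.mul_assoc]
    rw [hMT]
    have : V⁻¹ * (A i)ᵀ * (V⁻¹)ᵀ * (Vᵀ * X * V) = V⁻¹ * ((A i)ᵀ * X * V) := by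
      rw [show V⁻¹ * (A i)ᵀ * (V⁻¹)ᵀ * (Vᵀ * X * V)
          = V⁻¹ * (A i)ᵀ * ((V⁻¹)ᵀ * Vᵀ) * (X * V) by
            simp only [Matrix.mul_assoc], hVTinv]
      simp only [Matrix.mul_one, Matrix.mul_assoc]
    rw [this, Matrix.trace_mul_comm, Matrix.mul_assoc, Matrix.mul_assoc, hVVinv,
      Matrix.mul_one, hfit i]
  ext X
  simp only [Set.mem_setOf_eq, Set.mem_singleton_iff]
  constructor
  · rintro ⟨hfit, hpsd⟩
    set Y := Vᵀ * X * V with hY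
    have hYpsd : Y.PosSemidef := by
      have := hpsd.conjTranspose_mul_mul_same V
      simpa using this
    have hYstarPsd : Ystar.PosSemidef := by
      rw [hYstar]
      have := hXstarPSD.conjTranspose_mul_mul_same V
      simpa using this
    have hYeq : Y = Ystar := by
      by_contra hne
      have hlt := hYstarUnique Y (key_feas X hfit) hne
      have h1 : nuclearNorm Y = ∑ i, φ i * b i := by
        rw [nuclearNorm_of_posSemidef hYpsd, hY, key_trace X hfit]
      have h2 : nuclearNorm Ystar = ∑ i, φ i * b i := by
        rw [nuclearNorm_of_posSemidef hYstarPsd, hYstar, key_trace Xstar hXstarFit]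
      rw [h1, h2] at hlt
      exact lt_irrefl _ hlt
    have : Vᵀ * X * V = Vᵀ * Xstar * V := by rw [← hY, hYeq, hYstar]
    have h2 : (V⁻¹)ᵀ * (Vᵀ * X * V) * V⁻¹ = (V⁻¹)ᵀ * (Vᵀ * Xstar * V) * V⁻¹ := by
      rw [this]
    calc X = (V⁻¹)ᵀ * (Vᵀ * X * V) * V⁻¹ := by
              rw [show (V⁻¹)ᵀ * (Vᵀ * X * V) * V⁻¹
                  = ((V⁻¹)ᵀ * Vᵀ) * X * (V * V⁻¹) by
                    simp only [Matrix.mul_assoc], hVTinv, hVVinv]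
              simp
      _ = (V⁻¹)ᵀ * (Vᵀ * Xstar * V) * V⁻¹ := h2
      _ = Xstar := by
              rw [show (V⁻¹)ᵀ * (Vᵀ * Xstar * V) * V⁻¹
                  = ((V⁻¹)ᵀ * Vᵀ) * Xstar * (V * V⁻¹) by
                    simp only [Matrix.mul_assoc], hVTinv, hVVinv]
              simp
  · rintro rfl
    exact ⟨hXstarFit, hXstarPSD⟩
end

section
/- Let A ∈ ℝ^{m×n} and b ∈ ℝ^m, and suppose there exists w ∈ ℝ^m such that every entry of Aᵀ w equals 1. Suppose further that x⋆ ∈ ℝ^n is entrywise nonnegative, satisfies A x⋆ = b, and is the unique minimizer of the ℓ1-norm over the affine set {x ∈ ℝ^n : A x = b} (every x with A x = b and x ≠ x⋆ has ‖x⋆‖_1 < ‖x‖_1). Then the feasibility set {x ∈ ℝ^n : A x = b, x ≥ 0} is exactly the singleton {x⋆}. -/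
open Matrix

lemma sum_eq_dot {m n : ℕ} (A : Matrix (Fin m) (Fin n) ℝ) (w : Fin m → ℝ)
    (hw : ∀ j, (Aᵀ *ᵥ w) j = 1) (x : Fin n → ℝ) :
    ∑ i, x i = w ⬝ᵥ (A *ᵥ x) := by
  rw [dotProduct_mulVec, ← mulVec_transpose]
  unfold dotProduct
  simp [hw]

/-- If the all-ones vector lies in the row span of `A`, `x⋆ ≥ 0` solves `A x⋆ = b`,
and `x⋆` is the unique ℓ1-norm minimizer over the affine set `{x | A x = b}`, then the
nonnegative feasibility set `{x | A x = b, x ≥ 0}` is exactly `{x⋆}`. -/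
theorem nonneg_feasible_set_singleton
    {m n : ℕ}
    (A : Matrix (Fin m) (Fin n) ℝ)
    (b : Fin m → ℝ)
    (w : Fin m → ℝ)
    (hw : ∀ j, (Aᵀ *ᵥ w) j = 1)
    (xstar : Fin n → ℝ)
    (hxstarNonneg : ∀ i, 0 ≤ xstar i)
    (hxstarFit : A *ᵥ xstar = b)
    (hxstarUnique : ∀ x : Fin n → ℝ, A *ᵥ x = b → x ≠ xstar →
      ∑ i, |xstar i| < ∑ i, |x i|) :
    {x : Fin n → ℝ | A *ᵥ x = b ∧ ∀ i, 0 ≤ x i} = {xstar} := by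
  ext x
  simp only [Set.mem_setOf_eq, Set.mem_singleton_iff]
  constructor
  · rintro ⟨hfit, hnonneg⟩
    by_contra hne
    have hlt := hxstarUnique x hfit hne
    have h1 : ∑ i, |x i| = w ⬝ᵥ b := by
      rw [← hfit, ← sum_eq_dot A w hw]
      exact Finset.sum_congr rfl fun i _ => abs_of_nonneg (hnonneg i)
    have h2 : ∑ i, |xstar i| = w ⬝ᵥ b := by
      rw [← hxstarFit, ← sum_eq_dot A w hw]
      exact Finset.sum_congr rfl fun i _ => abs_of_nonneg (hxstarNonneg i)
    rw [h1, h2] at hlt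
    exact lt_irrefl _ hlt
  · rintro rfl
    exact ⟨hxstarFit, hxstarNonneg⟩
end
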